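/- If β_ω(x) < 0, then d_ω(x) ≠ 0 and max_{i=1,…,m} F_i′(x; d_ω(x)) ≤ −(ω/2)‖d_ω(x)‖²; in particular the direction d_ω(x) is a common descent direction for F_1,…,F_m at x. -/

import Mathlib

open Filter Topology
open scoped RealInnerProductSpace

noncomputable section

/-- `Euc n` is Euclidean `n`-space `ℝ^n`. -/
abbrev Euc (n : ℕ) := EuclideanSpace ℝ (Fin n)

/-- `HasDirDeriv f x d D` : the one-sided directional derivative of `f` at `x`
in direction `d` exists and equals `D`, i.e. `(f (x + α • d) - f x)/α → D` as `α → 0⁺`. -/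
def HasDirDeriv {n : ℕ} (f : Euc n → ℝ) (x d : Euc n) (D : ℝ) : Prop :=
  Filter.Tendsto (fun α : ℝ => (f (x + α • d) - f x) / α)
    (nhdsWithin 0 (Set.Ioi 0)) (nhds D)

/-- `x` is Pareto stationary for the objectives `F i`:
for every direction `d`, `max_i F_i'(x; d) ≥ 0`, i.e. some objective has
nonnegative directional derivative in direction `d`. -/
def ParetoStationary {n m : ℕ} (F : Fin m → Euc n → ℝ) (x : Euc n) : Prop :=
  ∀ d : Euc n, ∃ i : Fin m, ∃ D : ℝ, HasDirDeriv (F i) x d D ∧ 0 ≤ D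

/-- `θ_x(d) = max_i { ⟪∇g_i(x), d⟫ + ½⟪d, B_i(x) d⟫ + h_i(x+d) - h_i(x) }`. -/
def theta {n m : ℕ} (g h : Fin m → Euc n → ℝ)
    (B : Fin m → Euc n → (Euc n →L[ℝ] Euc n)) (x d : Euc n) : ℝ :=
  ⨆ i : Fin m, (⟪gradient (g i) x, d⟫ + (1 / 2) * ⟪d, B i x d⟫ + h i (x + d) - h i x)

/-- `φ_{ω,x}(d) = θ_x(d) + (ω/2)‖d‖²`. -/
def phi {n m : ℕ} (g h : Fin m → Euc n → ℝ)
    (B : Fin m → Euc n → (Euc n →L[ℝ] Euc n)) (ω : ℝ) (x d : Euc n) : ℝ :=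
  theta g h B x d + (ω / 2) * ‖d‖ ^ 2

/-- if β_ω(x) < 0 then d_ω(x) ≠ 0 and
max_i F_i′(x; d_ω(x)) ≤ −(ω/2)‖d_ω(x)‖². -/
theorem neg_beta_imp_descent_direction
    {n m : ℕ} (g h : Fin m → Euc n → ℝ)
    (B : Fin m → Euc n → (Euc n →L[ℝ] Euc n))
    (hm : 0 < m)
    (hg : ∀ i, ContDiff ℝ 2 (g i))
    (hsc : ∀ i, ∃ a : ℝ, 0 < a ∧ ∀ x y : Euc n,
      a * ‖x - y‖ ^ 2 ≤ ⟪gradient (g i) x - gradient (g i) y, x - y⟫)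
    (hh : ∀ i, ConvexOn ℝ Set.univ (h i))
    (hBsymm : ∀ i x (u v : Euc n), ⟪B i x u, v⟫ = ⟪u, B i x v⟫)
    (hBpos : ∀ i x (d : Euc n), d ≠ 0 → 0 < ⟪d, B i x d⟫)
    (ω : ℝ) (hω : 0 < ω)
    (dω : Euc n → Euc n)
    (hmin : ∀ y d, phi g h B ω y (dω y) ≤ phi g h B ω y d)
    (x : Euc n)
    (hβ : phi g h B ω x (dω x) < 0) :
    dω x ≠ 0 ∧ ∃ D : Fin m → ℝ,
      (∀ i, HasDirDeriv (fun y => g i y + h i y) x (dω x) (D i)) ∧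
      (⨆ i, D i) ≤ -(ω / 2) * ‖dω x‖ ^ 2 := by
  haveI : Nonempty (Fin m) := ⟨⟨0, hm⟩⟩
  set d := dω x with hdd
  -- d ≠ 0
  have hd0 : d ≠ 0 := by
    intro h0
    rw [h0] at hβ
    have h1 : phi g h B ω x 0 = 0 := by
      simp [phi, theta]
    rw [h1] at hβ
    exact lt_irrefl 0 hβ
  -- convexity of the restriction of h i to the line
  have hψconv : ∀ i, ConvexOn ℝ Set.univ (fun α : ℝ => h i (x + α • d)) := by
    intro i
    have h2 := (hh i).comp_affineMap (AffineMap.lineMap (x : Euc n) (x + d))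
    have h3 : (Set.univ : Set ℝ) = (AffineMap.lineMap (x : Euc n) (x + d)) ⁻¹' Set.univ := by
      simp
    rw [h3]
    have h4 : (fun α : ℝ => h i (x + α • d)) = h i ∘ ⇑(AffineMap.lineMap (x : Euc n) (x + d)) := by
      funext α
      simp [Function.comp, AffineMap.lineMap_apply, add_comm]
    rw [h4]
    exact h2
  -- slopes of h along the line
  set q : Fin m → ℝ → ℝ := fun i α => (h i (x + α • d) - h i x) / α with hq
  have hqmono : ∀ i, MonotoneOn (q i) (Set.Ioi (0:ℝ)) := by
    intro i a ha b hb hab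
    have := (hψconv i).secant_mono (a := 0) (x := a) (y := b) (Set.mem_univ _)
      (Set.mem_univ _) (Set.mem_univ _) (ne_of_gt ha) (ne_of_gt hb) hab
    simpa [hq, sub_zero] using this
  have hqbdd : ∀ i, BddBelow (q i '' Set.Ioi (0:ℝ)) := by
    intro i
    refine ⟨(h i (x + (-1 : ℝ) • d) - h i x) / (-1 : ℝ), ?_⟩
    rintro y ⟨a, ha, rfl⟩
    have := (hψconv i).secant_mono (a := 0) (x := (-1:ℝ)) (y := a) (Set.mem_univ _)
      (Set.mem_univ _) (Set.mem_univ _) (by norm_num) (ne_of_gt ha)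
      (by linarith [Set.mem_Ioi.mp ha])
    simpa [hq, sub_zero] using this
  set L : Fin m → ℝ := fun i => sInf (q i '' Set.Ioi (0:ℝ)) with hL
  have hqtends : ∀ i, Filter.Tendsto (q i) (nhdsWithin 0 (Set.Ioi 0)) (nhds (L i)) :=
    fun i => (hqmono i).tendsto_nhdsGT (hqbdd i)
  have hLle : ∀ i, L i ≤ h i (x + d) - h i x := by
    intro i
    have h1 : q i 1 = h i (x + d) - h i x := by simp [hq]
    have := csInf_le (hqbdd i) (Set.mem_image_of_mem (q i) (by norm_num : (1:ℝ) ∈ Set.Ioi 0))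
    rwa [h1] at this
  -- directional derivative of g i
  have hgd : ∀ i, Filter.Tendsto (fun α : ℝ => (g i (x + α • d) - g i x) / α)
      (nhdsWithin 0 (Set.Ioi 0)) (nhds ⟪gradient (g i) x, d⟫) := by
    intro i
    have hdiff : DifferentiableAt ℝ (g i) x :=
      ((hg i).differentiable (by norm_num)).differentiableAt
    have hgr : HasGradientAt (g i) (gradient (g i) x) x := hdiff.hasGradientAt
    have hfd : HasFDerivAt (g i) ((InnerProductSpace.toDual ℝ (Euc n)) (gradient (g i) x)) x :=
      hasGradientAt_iff_hasFDerivAt.mp hgr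
    have hc : HasDerivAt (fun α : ℝ => x + α • d) d 0 := by
      simpa using ((hasDerivAt_id (0:ℝ)).smul_const d).const_add x
    have hcd : HasDerivAt (fun α : ℝ => g i (x + α • d)) ⟪gradient (g i) x, d⟫ 0 := by
      have h0 : x = (fun α : ℝ => x + α • d) 0 := by simp
      rw [h0] at hfd
      have := hfd.comp_hasDerivAt 0 hc
      simpa [Function.comp_def, InnerProductSpace.toDual_apply_apply] using this
    have := hasDerivAt_iff_tendsto_slope.mp hcd
    have h2 := this.mono_left (nhdsWithin_mono 0 (fun a ha => ne_of_gt (Set.mem_Ioi.mp ha)))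
    refine h2.congr (fun α => ?_)
    simp [slope_def_field]
  -- the directional derivatives
  refine ⟨hd0, fun i => ⟪gradient (g i) x, d⟫ + L i, fun i => ?_, ?_⟩
  · have := (hgd i).add (hqtends i)
    refine this.congr (fun α => ?_)
    ring
  · refine ciSup_le (fun i => ?_)
    have hterm : ⟪gradient (g i) x, d⟫ + (1 / 2) * ⟪d, B i x d⟫ + h i (x + d) - h i x
        ≤ theta g h B x d := by
      rw [theta]
      exact le_ciSup (f := fun j : Fin m =>
        ⟪gradient (g j) x, d⟫ + (1 / 2) * ⟪d, B j x d⟫ + h j (x + d) - h j x)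
        (Set.Finite.bddAbove (Set.finite_range _)) i
    have hBp : 0 < ⟪d, B i x d⟫ := hBpos i x d hd0
    have hphi : theta g h B x d + (ω / 2) * ‖d‖ ^ 2 < 0 := hβ
    have hLi := hLle i
    nlinarith
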